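/- Suppose (x_n)_{n≥-1}, (y_n)_{n≥-1} solve the system with x_n ≠ 0 and y_n ≠ 0 for all n. Then for every n ≥ 0, x_{2n-1} = x_{-1}^{1-n}·(x_0·y_{-1}/y_0)^n·∏_{s=0}^{n-1} [(∏_{k=0}^{2s-1} c_k + x_{-1}·y_0·∑_{l=0}^{2s-1} d_l·∏_{k=l+1}^{2s-1} c_k) / (∏_{k=0}^{2s} a_k + x_0·y_{-1}·∑_{l=0}^{2s} b_l·∏_{k=l+1}^{2s} a_k)], where x_{-1}^{1-n} denotes an integer power of the nonzero real x_{-1}. -/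

import Mathlib

noncomputable def myA (u : ℝ) (a b : ℕ → ℝ) (m : ℕ) : ℝ :=
  (∏ k ∈ Finset.range m, a k) + u * ∑ l ∈ Finset.range m, b l * ∏ k ∈ Finset.Ico (l + 1) m, a k

lemma myA_zero (u : ℝ) (a b : ℕ → ℝ) : myA u a b 0 = 1 := by simp [myA]

lemma myA_succ (u : ℝ) (a b : ℕ → ℝ) (m : ℕ) :
    myA u a b (m + 1) = a m * myA u a b m + u * b m := by
  have h : ∀ l ∈ Finset.range m,
      b l * ∏ k ∈ Finset.Ico (l + 1) (m + 1), a k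
        = (b l * ∏ k ∈ Finset.Ico (l + 1) m, a k) * a m := by
    intro l hl
    rw [Finset.prod_Ico_succ_top (Finset.mem_range.mp hl)]
    ring
  rw [myA, Finset.prod_range_succ, Finset.sum_range_succ, Finset.sum_congr rfl h,
    ← Finset.sum_mul]
  simp [myA]
  ring

theorem stmt_5 (x y : ℤ → ℝ) (a b c d : ℕ → ℝ)
    (hx : ∀ n : ℤ, -1 ≤ n → x n ≠ 0) (hy : ∀ n : ℤ, -1 ≤ n → y n ≠ 0)
    (hda : ∀ n : ℕ, a n + b n * (x n * y ((n : ℤ) - 1)) ≠ 0)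
    (hdc : ∀ n : ℕ, c n + d n * (x ((n : ℤ) - 1) * y n) ≠ 0)
    (hxe : ∀ n : ℕ, x ((n : ℤ) + 1) =
      x n * y ((n : ℤ) - 1) / (y n * (a n + b n * (x n * y ((n : ℤ) - 1)))))
    (hye : ∀ n : ℕ, y ((n : ℤ) + 1) =
      x ((n : ℤ) - 1) * y n / (x n * (c n + d n * (x ((n : ℤ) - 1) * y n)))) :
    ∀ n : ℕ, x (2 * (n : ℤ) - 1) =
      x (-1) ^ (1 - (n : ℤ)) * (x 0 * y (-1) / y 0) ^ n *
        ∏ s ∈ Finset.range n,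
          ((∏ k ∈ Finset.range (2 * s), c k) +
              x (-1) * y 0 * ∑ l ∈ Finset.range (2 * s), d l * ∏ k ∈ Finset.Ico (l + 1) (2 * s), c k) /
          ((∏ k ∈ Finset.range (2 * s + 1), a k) +
              x 0 * y (-1) * ∑ l ∈ Finset.range (2 * s + 1), b l * ∏ k ∈ Finset.Ico (l + 1) (2 * s + 1), a k) := by
  have hx0 : x 0 ≠ 0 := hx 0 (by norm_num)
  have hy0 : y 0 ≠ 0 := hy 0 (by norm_num)
  have hxm1 : x (-1) ≠ 0 := hx (-1) le_rfl
  have hym1 : y (-1) ≠ 0 := hy (-1) le_rfl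
  -- closed form for u_m = x_m * y_{m-1}
  have hu : ∀ m : ℕ, x m * y ((m : ℤ) - 1) * myA (x 0 * y (-1)) a b m = x 0 * y (-1) := by
    intro m
    induction m with
    | zero => norm_num [myA_zero]
    | succ n ih =>
      have hyn : y n ≠ 0 := hy n (by omega)
      have hD := hda n
      have h1 : x ((n : ℤ) + 1) * y n * (a n + b n * (x n * y ((n : ℤ) - 1)))
          = x n * y ((n : ℤ) - 1) := by
        rw [hxe n, div_mul_eq_mul_div, div_mul_eq_mul_div, div_eq_iff (mul_ne_zero hyn hD)]; ring
      have e1 : ((n + 1 : ℕ) : ℤ) = (n : ℤ) + 1 := by push_cast; ring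
      have e2 : ((n : ℤ) + 1) - 1 = (n : ℤ) := by ring
      rw [e1, e2, myA_succ]
      linear_combination (myA (x 0 * y (-1)) a b n) * h1
        + (1 - x ((n : ℤ) + 1) * y n * b n) * ih
  -- closed form for v_m = x_{m-1} * y_m
  have hv : ∀ m : ℕ, x ((m : ℤ) - 1) * y m * myA (x (-1) * y 0) c d m = x (-1) * y 0 := by
    intro m
    induction m with
    | zero => norm_num [myA_zero]
    | succ n ih =>
      have hxn : x n ≠ 0 := hx n (by omega)
      have hD := hdc n
      have h1 : x n * y ((n : ℤ) + 1) * (c n + d n * (x ((n : ℤ) - 1) * y n))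
          = x ((n : ℤ) - 1) * y n := by
        rw [hye n, mul_div_assoc', div_mul_eq_mul_div, div_eq_iff (mul_ne_zero hxn hD)]; ring
      have e1 : ((n + 1 : ℕ) : ℤ) = (n : ℤ) + 1 := by push_cast; ring
      have e2 : ((n : ℤ) + 1) - 1 = (n : ℤ) := by ring
      rw [e1, e2, myA_succ]
      linear_combination (myA (x (-1) * y 0) c d n) * h1
        + (1 - x n * y ((n : ℤ) + 1) * d n) * ih
  have hAne : ∀ m : ℕ, myA (x 0 * y (-1)) a b m ≠ 0 := by
    intro m h
    have h2 := hu m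
    rw [h, mul_zero] at h2
    exact mul_ne_zero hx0 hym1 h2.symm
  have hCne : ∀ m : ℕ, myA (x (-1) * y 0) c d m ≠ 0 := by
    intro m h
    have h2 := hv m
    rw [h, mul_zero] at h2
    exact mul_ne_zero hxm1 hy0 h2.symm
  intro n
  induction n with
  | zero => norm_num
  | succ n ih =>
    have i1 : ((2 * n + 1 : ℕ) : ℤ) = 2 * (n : ℤ) + 1 := by push_cast; ring
    have i2 : (2 * (n : ℤ) + 1) - 1 = 2 * (n : ℤ) := by ring
    have i3 : ((2 * n : ℕ) : ℤ) = 2 * (n : ℤ) := by push_cast; ring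
    have hu' := hu (2 * n + 1)
    rw [i1, i2] at hu'
    have hv' := hv (2 * n)
    rw [i3] at hv'
    have hA' := hAne (2 * n + 1)
    have hC' := hCne (2 * n)
    have hy2n : y (2 * (n : ℤ)) ≠ 0 := hy _ (by omega)
    have hX1 : x (2 * (n : ℤ) + 1)
        = (x 0 * y (-1)) / (y (2 * (n : ℤ)) * myA (x 0 * y (-1)) a b (2 * n + 1)) := by
      rw [eq_div_iff (mul_ne_zero hy2n hA')]; linear_combination hu'
    have hX0 : x (2 * (n : ℤ) - 1)
        = (x (-1) * y 0) / (y (2 * (n : ℤ)) * myA (x (-1) * y 0) c d (2 * n)) := by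
      rw [eq_div_iff (mul_ne_zero hy2n hC')]; linear_combination hv'
    have key : x (2 * (n : ℤ) + 1) = x (2 * (n : ℤ) - 1) * (x (-1))⁻¹ * (x 0 * y (-1) / y 0)
        * (myA (x (-1) * y 0) c d (2 * n) / myA (x 0 * y (-1)) a b (2 * n + 1)) := by
      rw [hX1, hX0]
      field_simp
    have e4 : ((n + 1 : ℕ) : ℤ) = (n : ℤ) + 1 := by push_cast; ring
    have e5 : 2 * ((n : ℤ) + 1) - 1 = 2 * (n : ℤ) + 1 := by ring
    rw [e4, e5, key, ih, Finset.prod_range_succ, pow_succ,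
      show (1 - ((n : ℤ) + 1)) = (1 - (n : ℤ)) + (-1) from by ring,
      zpow_add₀ hxm1, zpow_neg_one]
    simp only [myA]
    ring
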